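/- Let (θ^A, w^A, {m^A_i}) and (θ^B, w^B, {m^B_j}) be generalized Q-systems of intertwiners in a braided C*-tensor subcategory C ⊆ End(N) with braiding ε. Define the braided product elements m^A_i ×_ε^± m^B_j := θ^A(ε^±_{θ^A,θ^B}) m^A_i θ^A(m^B_j). Then the projections p^{AB,±}_{i,j} := (m^A_i ×_ε^± m^B_j)* w^A w^B (w^B)*(w^A)* (m^A_i ×_ε^± m^B_j) satisfy p^{AB,±}_{i,j} = p^A_i · θ^A(p^B_j) = θ^A(p^B_j) · p^A_i, where p^A_i := (m^A_i)* w^A (w^A)* m^A_i and p^B_j := (m^B_j)* w^B (w^B)* m^B_j. -/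

import Mathlib

/-- The identity *-endomorphism. -/
def idEnd (A : Type*) [Semiring A] [StarRing A] [Algebra ℂ A] : A →⋆ₐ[ℂ] A :=
  { AlgHom.id ℂ A with map_star' := fun _ => rfl }

/-- A braiding on the C*-tensor category of *-endomorphisms of `A`: a family of unitaries
`eps ρ σ ∈ Hom(ρσ, σρ)` which is natural in both variables, tensorial (hexagon identities)
and trivial on the identity.  Both the DHR braiding `ε⁺` and its opposite `ε⁻` satisfy
these axioms. -/
structure Braiding (A : Type*) [Ring A] [StarRing A] [Algebra ℂ A] [StarModule ℂ A] where
  eps : (A →⋆ₐ[ℂ] A) → (A →⋆ₐ[ℂ] A) → A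
  unitary_left : ∀ ρ σ, star (eps ρ σ) * eps ρ σ = 1
  unitary_right : ∀ ρ σ, eps ρ σ * star (eps ρ σ) = 1
  intertwine : ∀ ρ σ (n : A), eps ρ σ * ρ (σ n) = σ (ρ n) * eps ρ σ
  nat_left : ∀ (ρ ρ' σ : A →⋆ₐ[ℂ] A) (t : A),
    (∀ n : A, t * ρ n = ρ' n * t) → eps ρ' σ * t = σ t * eps ρ σ
  nat_right : ∀ (ρ σ σ' : A →⋆ₐ[ℂ] A) (t : A),
    (∀ n : A, t * σ n = σ' n * t) → eps ρ σ' * ρ t = t * eps ρ σ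
  tensor_left : ∀ ρ ρ' σ, eps (ρ.comp ρ') σ = eps ρ σ * ρ (eps ρ' σ)
  tensor_right : ∀ ρ σ σ', eps ρ (σ.comp σ') = σ (eps ρ σ') * eps ρ σ
  eps_id_left : ∀ σ, eps (idEnd A) σ = 1
  eps_id_right : ∀ ρ, eps ρ (idEnd A) = 1

variable {A : Type*} [Ring A] [StarRing A] [Algebra ℂ A] [StarModule ℂ A]

/-- The braided product `m^A ×_ε m^B := θ^A(ε_{θ^A,θ^B}) m^A θ^A(m^B)` of Pimsner–Popa
elements. -/
def bprod (Br : Braiding A) (θA θB : A →⋆ₐ[ℂ] A) (mAi mBj : A) : A :=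
  θA (Br.eps θA θB) * mAi * θA mBj

/-- The Pimsner–Popa projections of the braided product of two
generalized Q-systems of intertwiners factorize:
`p^{AB}_{i,j} = p^A_i ⋅ θ^A(p^B_j) = θ^A(p^B_j) ⋅ p^A_i`. -/
theorem braided_product_projection_factorization
    (Br : Braiding A) (θA θB : A →⋆ₐ[ℂ] A)
    {I J : Type*} (wA wB : A) (mA : I → A) (mB : J → A)
    (hwA : ∀ n : A, wA * n = θA n * wA) (hwA_iso : star wA * wA = 1)
    (hwB : ∀ n : A, wB * n = θB n * wB) (hwB_iso : star wB * wB = 1)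
    (hmA : ∀ i (n : A), mA i * θA n = θA (θA n) * mA i)
    (hmB : ∀ j (n : A), mB j * θB n = θB (θB n) * mB j)
    (i : I) (j : J) :
    star (bprod Br θA θB (mA i) (mB j)) * (wA * wB * star wB * star wA) *
        bprod Br θA θB (mA i) (mB j)
      = (star (mA i) * (wA * star wA) * mA i) *
          θA (star (mB j) * (wB * star wB) * mB j)
    ∧ star (bprod Br θA θB (mA i) (mB j)) * (wA * wB * star wB * star wA) *
        bprod Br θA θB (mA i) (mB j)
      = θA (star (mB j) * (wB * star wB) * mB j) *
          (star (mA i) * (wA * star wA) * mA i) := by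
  set ε := Br.eps θA θB with hε
  -- naturality: ε * θA wB = wB
  have h1 : ε * θA wB = wB := by
    have h := Br.nat_right θA (idEnd A) θB wB (fun n => hwB n)
    rw [Br.eps_id_right, mul_one] at h
    exact h
  have h2 : star ε * wB = θA wB := by
    conv_lhs => rw [← h1]
    rw [← mul_assoc, Br.unitary_left, one_mul]
  -- T := star (mA i) * wA commutes with the range of θA
  have hT : ∀ x : A, (star (mA i) * wA) * θA x = θA x * (star (mA i) * wA) := by
    intro x
    have h4 : star (mA i) * θA (θA x) = θA x * star (mA i) := by
      have h5 := congrArg star (hmA i (star x))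
      simpa [star_mul, map_star] using h5.symm
    rw [mul_assoc, hwA (θA x), ← mul_assoc, h4, mul_assoc]
  have hT' : ∀ x : A, (star wA * mA i) * θA x = θA x * (star wA * mA i) := by
    intro x
    have h6 := congrArg star (hT (star x))
    simpa [star_mul, map_star, mul_assoc] using h6.symm
  -- the half product  Y := (star bprod) * wA * wB
  have hsb : star (bprod Br θA θB (mA i) (mB j))
      = θA (star (mB j)) * (star (mA i) * (θA (star ε))) := by
    simp [bprod, star_mul, map_star, mul_assoc, ← hε]
  have hY : star (bprod Br θA θB (mA i) (mB j)) * (wA * wB)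
      = (star (mA i) * wA) * θA (star (mB j) * wB) := by
    have hw : θA (star ε) * wA = wA * star ε := (hwA (star ε)).symm
    calc star (bprod Br θA θB (mA i) (mB j)) * (wA * wB)
        = θA (star (mB j)) * (star (mA i) * (θA (star ε) * wA * wB)) := by
          rw [hsb]; simp [mul_assoc]
      _ = θA (star (mB j)) * (star (mA i) * (wA * θA wB)) := by
          rw [hw, mul_assoc, h2]
      _ = θA (star (mB j)) * ((star (mA i) * wA) * θA wB) := by
          simp [mul_assoc]
      _ = (star (mA i) * wA) * (θA (star (mB j)) * θA wB) := by
          rw [← mul_assoc, ← hT, mul_assoc]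
      _ = (star (mA i) * wA) * θA (star (mB j) * wB) := by rw [map_mul]
  have hY' : (star wB * star wA) * bprod Br θA θB (mA i) (mB j)
      = θA (star wB * mB j) * (star wA * mA i) := by
    have := congrArg star hY
    simpa [star_mul, map_star, mul_assoc] using this
  -- main computation
  have key : star (bprod Br θA θB (mA i) (mB j)) * (wA * wB * star wB * star wA) *
        bprod Br θA θB (mA i) (mB j)
      = ((star (mA i) * wA) * (star wA * mA i)) *
          θA ((star (mB j) * wB) * (star wB * mB j)) := by
    calc star (bprod Br θA θB (mA i) (mB j)) * (wA * wB * star wB * star wA) *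
          bprod Br θA θB (mA i) (mB j)
        = (star (bprod Br θA θB (mA i) (mB j)) * (wA * wB)) *
            ((star wB * star wA) * bprod Br θA θB (mA i) (mB j)) := by
          simp [mul_assoc]
      _ = ((star (mA i) * wA) * θA (star (mB j) * wB)) *
            (θA (star wB * mB j) * (star wA * mA i)) := by rw [hY, hY']
      _ = (star (mA i) * wA) * (θA ((star (mB j) * wB) * (star wB * mB j)) *
            (star wA * mA i)) := by
          rw [map_mul]; simp [mul_assoc]
      _ = (star (mA i) * wA) * ((star wA * mA i) *
            θA ((star (mB j) * wB) * (star wB * mB j))) := by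
          rw [hT']
      _ = ((star (mA i) * wA) * (star wA * mA i)) *
            θA ((star (mB j) * wB) * (star wB * mB j)) := by
          simp [mul_assoc]
  have hrw1 : (star (mA i) * wA) * (star wA * mA i)
      = star (mA i) * (wA * star wA) * mA i := by simp [mul_assoc]
  have hrw2 : (star (mB j) * wB) * (star wB * mB j)
      = star (mB j) * (wB * star wB) * mB j := by simp [mul_assoc]
  constructor
  · rw [key, hrw1, hrw2]
  · rw [key, hrw2, hrw1]
    set T := star (mA i) * (wA * star wA) * mA i with hTdef
    have c := hT (star (mB j) * (wB * star wB) * mB j)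
    have c' := hT' (star (mB j) * (wB * star wB) * mB j)
    have hTsplit : T = (star (mA i) * wA) * (star wA * mA i) := by
      rw [hTdef]; simp [mul_assoc]
    rw [hTsplit]
    calc (star (mA i) * wA) * (star wA * mA i) *
          θA (star (mB j) * (wB * star wB) * mB j)
        = (star (mA i) * wA) * ((star wA * mA i) *
            θA (star (mB j) * (wB * star wB) * mB j)) := by rw [mul_assoc]
      _ = (star (mA i) * wA) * (θA (star (mB j) * (wB * star wB) * mB j) *
            (star wA * mA i)) := by rw [c']
      _ = ((star (mA i) * wA) * θA (star (mB j) * (wB * star wB) * mB j)) *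
            (star wA * mA i) := by simp [mul_assoc]
      _ = (θA (star (mB j) * (wB * star wB) * mB j) * (star (mA i) * wA)) *
            (star wA * mA i) := by rw [c]
      _ = θA (star (mB j) * (wB * star wB) * mB j) *
            ((star (mA i) * wA) * (star wA * mA i)) := by rw [mul_assoc]
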